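/- arXiv:2012.10740 — 7 statements merged into one kernel-verified Lean document; each statement's English description precedes it below -/
import Mathlib

section
/- (Lemma 2.1, first part) For any real sequence w_1, …, w_n and every 1 ≤ k ≤ n, the L1_R kernels satisfy 2 w_k ∑_{j=1}^{k} a_{k−j}^{(k)} w_j ≥ w_k² ∑_{j=1}^{k} a_{k−j}^{(k)} + ∑_{j=1}^{k} q_{k−j}^{(k)} w_j² − ∑_{j=1}^{k−1} q_{k−j−1}^{(k−1)} w_j². -/
open Finset intervalIntegral Matrix

noncomputable def omegaK (μ s : ℝ) : ℝ := s ^ (μ - 1) / Real.Gamma μ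

noncomputable def qK (α : ℝ) (t : ℕ → ℝ) (n k : ℕ) : ℝ :=
  ∫ s in (t (k - 1))..(t k), omegaK α (t n - s)

noncomputable def aK (α : ℝ) (t : ℕ → ℝ) (n k : ℕ) : ℝ :=
  if k = n then qK α t n n else qK α t n k - qK α t (n - 1) k

noncomputable def thetaAux (A : ℕ → ℕ → ℝ) (n : ℕ) : ℕ → ℕ → ℝ
  | 0, m => if m = 0 then 1 / A n n else 0
  | M + 1, m =>
      if m ≤ M then thetaAux A n M m
      else -(1 / A (n - (M + 1)) (n - (M + 1))) *
        ∑ ℓ ∈ Finset.range (M + 1), thetaAux A n M ℓ * A (n - ℓ) (n - (M + 1))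

noncomputable def thetaK (α : ℝ) (t : ℕ → ℝ) (n k : ℕ) : ℝ :=
  thetaAux (aK α t) n (n - k) (n - k)

noncomputable def Hfun (a b : ℝ) : ℝ := a ^ 3 / 3 + a * b ^ 2 / 2 + b ^ 3 / 6 - (a + b) / 2

noncomputable def Ffun (u : ℝ) : ℝ := (1 - u ^ 2) ^ 2 / 4

noncomputable def zetaK (α : ℝ) (t : ℕ → ℝ) (n j : ℕ) : ℝ :=
  if j = n then thetaK α t n n else thetaK α t n j - thetaK α t n (j + 1)

/-- Interval integrability of `s ↦ omegaK α (c - s)` when `α > 0`. -/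
lemma omegaK_intervalIntegrable (α : ℝ) (hα0 : 0 < α) (c a b : ℝ) :
    IntervalIntegrable (fun s => omegaK α (c - s)) MeasureTheory.volume a b := by
  have h : IntervalIntegrable (fun x : ℝ => x ^ (α - 1)) MeasureTheory.volume
      (c - a) (c - b) := intervalIntegral.intervalIntegrable_rpow' (by linarith)
  have h2 := h.comp_sub_left c
  simp only [sub_sub_cancel] at h2
  have h3 : IntervalIntegrable (fun s => (c - s) ^ (α - 1) / Real.Gamma α)
      MeasureTheory.volume a b := h2.div_const _
  exact h3

/-- The key sign fact:  `qK α t (m+1) j ≤ qK α t m j` for `1 ≤ j ≤ m`. -/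
lemma qK_anti (α : ℝ) (hα0 : 0 < α) (hα1 : α < 1)
    (N : ℕ) (t : ℕ → ℝ) (ht : ∀ k, k < N → t k < t (k + 1))
    (m j : ℕ) (hj1 : 1 ≤ j) (hjm : j ≤ m) (hmN : m + 1 ≤ N) :
    qK α t (m + 1) j ≤ qK α t m j := by
  have hmono : ∀ i i', i < i' → i' ≤ N → t i < t i' := by
    intro i i' hlt hle
    induction i' with
    | zero => omega
    | succ p ih =>
      rcases Nat.lt_or_ge i p with h | h
      · exact lt_trans (ih h (by omega)) (ht p (by omega))
      · have : i = p := by omega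
        subst this; exact ht i (by omega)
  have htm : t (j - 1) < t j := hmono _ _ (by omega) (by omega)
  have htjm : t j ≤ t m := by
    rcases Nat.lt_or_ge j m with h | h
    · exact (hmono j m h (by omega)).le
    · have : j = m := by omega
      rw [show j = m from this]
  have htm1 : t m < t (m + 1) := ht m (by omega)
  unfold qK
  refine intervalIntegral.integral_mono_ae_restrict htm.le
    (omegaK_intervalIntegrable α hα0 _ _ _) (omegaK_intervalIntegrable α hα0 _ _ _) ?_
  have hnull : (MeasureTheory.volume.restrict (Set.Icc (t (j-1)) (t j))) {t m} = 0 :=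
    le_antisymm (le_trans (MeasureTheory.Measure.restrict_apply_le _ _)
      (le_of_eq (MeasureTheory.measure_singleton _))) zero_le
  filter_upwards [MeasureTheory.ae_restrict_mem measurableSet_Icc,
    MeasureTheory.measure_eq_zero_iff_ae_notMem.mp hnull] with s hs hne
  have hsm : s < t m := lt_of_le_of_ne (le_trans hs.2 htjm) (by simpa using hne)
  unfold omegaK
  have hΓ : 0 < Real.Gamma α := Real.Gamma_pos_of_pos hα0
  have hr : (t (m+1) - s) ^ (α - 1) ≤ (t m - s) ^ (α - 1) :=
    Real.rpow_le_rpow_of_nonpos (by linarith) (by linarith) (by linarith)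
  exact div_le_div_of_nonneg_right hr hΓ.le

theorem stmt2 (α : ℝ) (hα0 : 0 < α) (hα1 : α < 1)
    (N : ℕ) (t : ℕ → ℝ) (ht0 : t 0 = 0) (ht : ∀ k, k < N → t k < t (k + 1)) :
    ∀ n, n ≤ N → ∀ w : ℕ → ℝ, ∀ k, 1 ≤ k → k ≤ n →
      w k ^ 2 * (∑ j ∈ Finset.Icc 1 k, aK α t k j)
        + ∑ j ∈ Finset.Icc 1 k, qK α t k j * w j ^ 2
        - ∑ j ∈ Finset.Icc 1 (k - 1), qK α t (k - 1) j * w j ^ 2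
      ≤ 2 * w k * ∑ j ∈ Finset.Icc 1 k, aK α t k j * w j := by
  intro n hnN w k hk1 hkn
  obtain ⟨m, rfl⟩ : ∃ m, k = m + 1 := ⟨k - 1, by omega⟩
  simp only [Nat.add_sub_cancel]
  rw [Finset.sum_Icc_succ_top (by omega : 1 ≤ m + 1),
      Finset.sum_Icc_succ_top (by omega : 1 ≤ m + 1),
      Finset.sum_Icc_succ_top (by omega : 1 ≤ m + 1)]
  have hak : aK α t (m + 1) (m + 1) = qK α t (m + 1) (m + 1) := by simp [aK]
  have key : ∀ j ∈ Finset.Icc 1 m,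
      w (m+1) ^ 2 * aK α t (m+1) j + qK α t (m+1) j * w j ^ 2
        - qK α t m j * w j ^ 2 - 2 * w (m+1) * (aK α t (m+1) j * w j) ≤ 0 := by
    intro j hj
    simp only [Finset.mem_Icc] at hj
    have hne : j ≠ m + 1 := by omega
    have haq : aK α t (m+1) j = qK α t (m+1) j - qK α t m j := by
      simp [aK, hne]
    have hle : qK α t (m+1) j ≤ qK α t m j :=
      qK_anti α hα0 hα1 N t ht m j hj.1 hj.2 (by omega)
    have hneg : aK α t (m+1) j ≤ 0 := by rw [haq]; linarith
    have : aK α t (m+1) j * (w (m+1) - w j) ^ 2 ≤ 0 :=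
      mul_nonpos_of_nonpos_of_nonneg hneg (sq_nonneg _)
    nlinarith [this, haq]
  have hsum : ∑ j ∈ Finset.Icc 1 m,
      (w (m+1) ^ 2 * aK α t (m+1) j + qK α t (m+1) j * w j ^ 2
        - qK α t m j * w j ^ 2 - 2 * w (m+1) * (aK α t (m+1) j * w j)) ≤ 0 :=
    Finset.sum_nonpos key
  have hexp : ∑ j ∈ Finset.Icc 1 m,
      (w (m+1) ^ 2 * aK α t (m+1) j + qK α t (m+1) j * w j ^ 2
        - qK α t m j * w j ^ 2 - 2 * w (m+1) * (aK α t (m+1) j * w j))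
      = w (m+1) ^ 2 * (∑ j ∈ Finset.Icc 1 m, aK α t (m+1) j)
        + ∑ j ∈ Finset.Icc 1 m, qK α t (m+1) j * w j ^ 2
        - ∑ j ∈ Finset.Icc 1 m, qK α t m j * w j ^ 2
        - 2 * w (m+1) * ∑ j ∈ Finset.Icc 1 m, aK α t (m+1) j * w j := by
    simp only [Finset.sum_sub_distrib, Finset.sum_add_distrib, Finset.mul_sum]
  rw [hexp] at hsum
  nlinarith [hsum, hak]
end

section
/- (Lemma 2.1, second part) For any real sequence w_1, …, w_n, the L1_R kernels are positive definite in the sense that 2 ∑_{k=1}^{n} w_k ∑_{j=1}^{k} a_{k−j}^{(k)} w_j ≥ ∑_{k=1}^{n} ( q_{n−k}^{(n)} + ∑_{j=1}^{k} a_{k−j}^{(k)} ) w_k², and the right-hand side is strictly positive if the w_k are not all zero. -/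
open Finset intervalIntegral Matrix

lemma qK_formula {α : ℝ} (hα0 : 0 < α) (t : ℕ → ℝ) (n k : ℕ) :
    qK α t n k = ((t n - t (k - 1)) ^ α - (t n - t k) ^ α) / (α * Real.Gamma α) := by
  have h1 : (-1 : ℝ) < α - 1 := by linarith
  unfold qK omegaK
  rw [intervalIntegral.integral_div]
  rw [intervalIntegral.integral_comp_sub_left (fun s => s ^ (α - 1)) (t n)]
  rw [integral_rpow (Or.inl h1)]
  rw [show α - 1 + 1 = α by ring, div_div]

lemma rpow_slope {α : ℝ} (hα0 : 0 < α) (hα1 : α < 1) {x y δ : ℝ}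
    (hx : 0 ≤ x) (hxy : x ≤ y) (hδ : 0 ≤ δ) :
    (y + δ) ^ α - y ^ α ≤ (x + δ) ^ α - x ^ α := by
  rcases eq_or_lt_of_le (show x ≤ y + δ by linarith) with h | h
  · have hy : y = x := le_antisymm (by linarith) hxy
    have hd : δ = 0 := by linarith
    simp [hy, hd]
  · have hconc : ConcaveOn ℝ (Set.Ici 0) (fun z : ℝ => z ^ α) :=
      (Real.strictConcaveOn_rpow hα0 hα1).concaveOn
    set s := y + δ - x with hs
    have hspos : 0 < s := by simp only [hs]; linarith
    have hyx : 0 ≤ y - x := by linarith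
    have ha : 0 ≤ (y - x) / s := by positivity
    have hb : 0 ≤ δ / s := by positivity
    have hab : (y - x) / s + δ / s = 1 := by field_simp; rw [hs]; ring
    have hmemx : x ∈ Set.Ici (0:ℝ) := hx
    have hmemy : y + δ ∈ Set.Ici (0:ℝ) := by simp; linarith
    have h1 := hconc.2 hmemx hmemy ha hb hab
    have h2 := hconc.2 hmemx hmemy hb ha (by linarith [hab])
    simp only [smul_eq_mul] at h1 h2
    have e1 : (y - x) / s * x + δ / s * (y + δ) = x + δ := by field_simp; ring
    have e2 : δ / s * x + (y - x) / s * (y + δ) = y := by field_simp; ring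
    rw [e1] at h1
    rw [e2] at h2
    have h3 : ((y - x) / s + δ / s) * (x ^ α + (y + δ) ^ α) = x ^ α + (y + δ) ^ α := by
      rw [hab, one_mul]
    have h4 : x ^ α + (y + δ) ^ α
        = ((y - x) / s * x ^ α + δ / s * (y + δ) ^ α)
          + (δ / s * x ^ α + (y - x) / s * (y + δ) ^ α) := by
      rw [← h3]; ring
    linarith [h1, h2]

lemma aux_swap (α : ℝ) (t : ℕ → ℝ) (v : ℕ → ℝ) (n : ℕ) :
    ∑ k ∈ Icc 1 n, ∑ j ∈ Icc 1 (k - 1), aK α t k j * v j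
      = ∑ j ∈ Icc 1 n, (qK α t n j - qK α t j j) * v j := by
  induction n with
  | zero => simp
  | succ n ih =>
    rw [Finset.sum_Icc_succ_top (by omega : 1 ≤ n + 1),
        Finset.sum_Icc_succ_top (by omega : 1 ≤ n + 1), ih]
    simp only [Nat.add_sub_cancel, sub_self, zero_mul, add_zero]
    rw [← Finset.sum_add_distrib]
    apply Finset.sum_congr rfl
    intro j hj
    have hj' : j ≠ n + 1 := by simp only [Finset.mem_Icc] at hj; omega
    rw [aK, if_neg hj']
    simp only [Nat.add_sub_cancel]
    ring

lemma telescope (F : ℕ → ℝ) : ∀ m : ℕ, ∑ j ∈ Icc 1 m, (F (j - 1) - F j) = F 0 - F m := by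
  intro m
  induction m with
  | zero => simp
  | succ m ih =>
    rw [Finset.sum_Icc_succ_top (by omega : 1 ≤ m + 1), ih]
    simp only [Nat.add_sub_cancel]
    ring

lemma q_rowsum {α : ℝ} (hα0 : 0 < α) (t : ℕ → ℝ) (m : ℕ) :
    ∑ j ∈ Icc 1 m, qK α t m j
      = ((t m - t 0) ^ α - (t m - t m) ^ α) / (α * Real.Gamma α) := by
  have h : ∀ j ∈ Icc 1 m, qK α t m j
      = ((t m - t (j - 1)) ^ α - (t m - t j) ^ α) / (α * Real.Gamma α) :=
    fun j _ => qK_formula hα0 t m j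
  rw [Finset.sum_congr rfl h, ← Finset.sum_div]
  congr 1
  exact telescope (fun j => (t m - t j) ^ α) m

lemma a_rowsum (α : ℝ) (t : ℕ → ℝ) {k : ℕ} (hk : 1 ≤ k) :
    ∑ j ∈ Icc 1 k, aK α t k j
      = ∑ j ∈ Icc 1 k, qK α t k j - ∑ j ∈ Icc 1 (k - 1), qK α t (k - 1) j := by
  obtain ⟨m, rfl⟩ : ∃ m, k = m + 1 := ⟨k - 1, by omega⟩
  rw [Finset.sum_Icc_succ_top (by omega : 1 ≤ m + 1),
      Finset.sum_Icc_succ_top (by omega : 1 ≤ m + 1)]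
  simp only [Nat.add_sub_cancel]
  rw [aK, if_pos rfl]
  have h : ∀ j ∈ Icc 1 m, aK α t (m + 1) j = qK α t (m + 1) j - qK α t m j := by
    intro j hj
    have hj' : j ≠ m + 1 := by simp only [Finset.mem_Icc] at hj; omega
    rw [aK, if_neg hj', Nat.add_sub_cancel]
  rw [Finset.sum_congr rfl h, Finset.sum_sub_distrib]
  ring

theorem stmt3 (α : ℝ) (hα0 : 0 < α) (hα1 : α < 1)
    (N : ℕ) (t : ℕ → ℝ) (ht0 : t 0 = 0) (ht : ∀ k, k < N → t k < t (k + 1)) :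
    ∀ n, 1 ≤ n → n ≤ N → ∀ w : ℕ → ℝ,
      (∑ k ∈ Finset.Icc 1 n, (qK α t n k + ∑ j ∈ Finset.Icc 1 k, aK α t k j) * w k ^ 2
        ≤ 2 * ∑ k ∈ Finset.Icc 1 n, w k * ∑ j ∈ Finset.Icc 1 k, aK α t k j * w j) ∧
      ((∃ k ∈ Finset.Icc 1 n, w k ≠ 0) →
        0 < ∑ k ∈ Finset.Icc 1 n, (qK α t n k + ∑ j ∈ Finset.Icc 1 k, aK α t k j) * w k ^ 2) := by
  intro n hn1 hnN w
  have hΓ : 0 < Real.Gamma α := Real.Gamma_pos_of_pos hα0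
  have hC : 0 < α * Real.Gamma α := mul_pos hα0 hΓ
  have tmono : ∀ j, j ≤ N → ∀ i, i ≤ j → t i ≤ t j := by
    intro j
    induction j with
    | zero => exact fun _ i hi => le_of_eq (by rw [Nat.le_zero.mp hi])
    | succ j ih =>
      intro hjN i hi
      rcases Nat.eq_or_lt_of_le hi with h | h
      · rw [h]
      · exact le_of_lt (lt_of_le_of_lt (ih (by omega) i (by omega)) (ht j (by omega)))
  have hq_pos : ∀ k, 1 ≤ k → k ≤ n → 0 < qK α t n k := by
    intro k hk1 hkn
    rw [qK_formula hα0]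
    apply div_pos _ hC
    have h1 : t (k - 1) < t k := by
      have h := ht (k - 1) (by omega)
      have e : k - 1 + 1 = k := by omega
      rwa [e] at h
    have h2 : t k ≤ t n := tmono n hnN k hkn
    have h3 : 0 ≤ t n - t k := by linarith
    have := Real.rpow_lt_rpow h3 (by linarith : t n - t k < t n - t (k - 1)) hα0
    linarith
  have ha_nonpos : ∀ k j, 1 ≤ j → j + 1 ≤ k → k ≤ n → aK α t k j ≤ 0 := by
    intro k j hj1 hjk hkn
    rw [aK, if_neg (by omega : j ≠ k), qK_formula hα0, qK_formula hα0, div_sub_div_same]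
    apply div_nonpos_of_nonpos_of_nonneg _ hC.le
    have hx : 0 ≤ t (k - 1) - t j := by
      have := tmono (k - 1) (by omega) j (by omega); linarith
    have hxy : t (k - 1) - t j ≤ t k - t j := by
      have := tmono k (by omega) (k - 1) (by omega); linarith
    have hδ : 0 ≤ t j - t (j - 1) := by
      have := tmono j (by omega) (j - 1) (by omega); linarith
    have hs := rpow_slope hα0 hα1 hx hxy hδ
    have e1 : t (k - 1) - t j + (t j - t (j - 1)) = t (k - 1) - t (j - 1) := by ring
    have e2 : t k - t j + (t j - t (j - 1)) = t k - t (j - 1) := by ring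
    rw [e1, e2] at hs
    linarith
  have hrow : ∀ k, 1 ≤ k → k ≤ n → 0 ≤ ∑ j ∈ Finset.Icc 1 k, aK α t k j := by
    intro k hk1 hkn
    rw [a_rowsum α t hk1, q_rowsum hα0, q_rowsum hα0]
    rw [sub_self, sub_self, Real.zero_rpow (ne_of_gt hα0), div_sub_div_same]
    apply div_nonneg _ hC.le
    have h1 : 0 ≤ t (k - 1) - t 0 := by
      have := tmono (k - 1) (by omega) 0 (by omega); linarith
    have h2 : t (k - 1) - t 0 ≤ t k - t 0 := by
      have := tmono k (by omega) (k - 1) (by omega); linarith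
    have := Real.rpow_le_rpow h1 h2 hα0.le
    linarith
  constructor
  · -- main inequality
    have identity : 2 * ∑ k ∈ Finset.Icc 1 n, w k * ∑ j ∈ Finset.Icc 1 k, aK α t k j * w j
        = (∑ k ∈ Finset.Icc 1 n, ∑ j ∈ Finset.Icc 1 k, aK α t k j * (2 * w k * w j - w k ^ 2))
          + ∑ k ∈ Finset.Icc 1 n, (∑ j ∈ Finset.Icc 1 k, aK α t k j) * w k ^ 2 := by
      rw [Finset.mul_sum, ← Finset.sum_add_distrib]
      apply Finset.sum_congr rfl
      intro k _
      rw [Finset.mul_sum, Finset.mul_sum, Finset.sum_mul, ← Finset.sum_add_distrib]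
      apply Finset.sum_congr rfl
      intro j _
      ring
    have step2 : ∑ k ∈ Finset.Icc 1 n,
        (qK α t k k * w k ^ 2 + ∑ j ∈ Finset.Icc 1 (k - 1), aK α t k j * w j ^ 2)
        ≤ ∑ k ∈ Finset.Icc 1 n, ∑ j ∈ Finset.Icc 1 k, aK α t k j * (2 * w k * w j - w k ^ 2) := by
      apply Finset.sum_le_sum
      intro k hk
      simp only [Finset.mem_Icc] at hk
      obtain ⟨m, rfl⟩ : ∃ m, k = m + 1 := ⟨k - 1, by omega⟩
      rw [Finset.sum_Icc_succ_top (by omega : 1 ≤ m + 1)]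
      simp only [Nat.add_sub_cancel]
      have hterm : aK α t (m + 1) (m + 1) * (2 * w (m + 1) * w (m + 1) - w (m + 1) ^ 2)
          = qK α t (m + 1) (m + 1) * w (m + 1) ^ 2 := by
        rw [aK, if_pos rfl]; ring
      rw [hterm]
      have hsum : ∑ j ∈ Finset.Icc 1 m, aK α t (m + 1) j * w j ^ 2
          ≤ ∑ j ∈ Finset.Icc 1 m, aK α t (m + 1) j * (2 * w (m + 1) * w j - w (m + 1) ^ 2) := by
        apply Finset.sum_le_sum
        intro j hj
        simp only [Finset.mem_Icc] at hj
        have hanp := ha_nonpos (m + 1) j hj.1 (by omega) hk.2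
        have hb : 2 * w (m + 1) * w j - w (m + 1) ^ 2 ≤ w j ^ 2 := by
          nlinarith [sq_nonneg (w j - w (m + 1))]
        exact mul_le_mul_of_nonpos_left hb hanp
      linarith
    have step3 : ∑ k ∈ Finset.Icc 1 n, ∑ j ∈ Finset.Icc 1 (k - 1), aK α t k j * w j ^ 2
        = ∑ j ∈ Finset.Icc 1 n, (qK α t n j - qK α t j j) * w j ^ 2 :=
      aux_swap α t (fun j => w j ^ 2) n
    have S1eq : ∑ k ∈ Finset.Icc 1 n,
        (qK α t k k * w k ^ 2 + ∑ j ∈ Finset.Icc 1 (k - 1), aK α t k j * w j ^ 2)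
        = ∑ k ∈ Finset.Icc 1 n, qK α t n k * w k ^ 2 := by
      rw [Finset.sum_add_distrib, step3, ← Finset.sum_add_distrib]
      apply Finset.sum_congr rfl
      intro k _
      ring
    have goalLHS : ∑ k ∈ Finset.Icc 1 n,
        (qK α t n k + ∑ j ∈ Finset.Icc 1 k, aK α t k j) * w k ^ 2
        = (∑ k ∈ Finset.Icc 1 n, qK α t n k * w k ^ 2)
          + ∑ k ∈ Finset.Icc 1 n, (∑ j ∈ Finset.Icc 1 k, aK α t k j) * w k ^ 2 := by
      rw [← Finset.sum_add_distrib]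
      apply Finset.sum_congr rfl
      intro k _
      ring
    rw [identity, goalLHS]
    linarith [step2, S1eq.symm.le]
  · -- strict positivity
    rintro ⟨k0, hk0, hw0⟩
    simp only [Finset.mem_Icc] at hk0
    apply Finset.sum_pos'
    · intro k hk
      simp only [Finset.mem_Icc] at hk
      have := add_pos_of_pos_of_nonneg (hq_pos k hk.1 hk.2) (hrow k hk.1 hk.2)
      exact mul_nonneg this.le (sq_nonneg _)
    · refine ⟨k0, by simp [hk0.1, hk0.2], ?_⟩
      have hcoeff := add_pos_of_pos_of_nonneg (hq_pos k0 hk0.1 hk0.2) (hrow k0 hk0.1 hk0.2)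
      have hsq : 0 < w k0 ^ 2 :=
        lt_of_le_of_ne (sq_nonneg _) (Ne.symm (pow_ne_zero 2 hw0))
      exact mul_pos hcoeff hsq
end

section
/- (Lemma 3.2) For each fixed n with 2 ≤ n ≤ N, the DOC kernels satisfy θ_0^{(n)} = 1/ω_{1+α}(τ_n) and θ_0^{(n)} − θ_1^{(n)} > ω_α(r_n + 1) / ( ω_{1+α}(τ_n) · ω_{1+α}(1) ), where r_n := τ_n/τ_{n−1} is the adjoint step ratio. -/
open Finset intervalIntegral Matrix

lemma qval (α : ℝ) (hα0 : 0 < α) (a b c : ℝ) :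
    (∫ s in a..b, omegaK α (c - s)) = ((c-a)^α - (c-b)^α)/Real.Gamma (1+α) := by
  have h1 : (∫ s in a..b, omegaK α (c - s)) = (∫ s in a..b, (c - s) ^ (α-1)) / Real.Gamma α := by
    simp [omegaK, intervalIntegral.integral_div]
  rw [h1, intervalIntegral.integral_comp_sub_left (fun x => x ^ (α-1)) c,
    integral_rpow (Or.inl (by linarith))]
  rw [show (1:ℝ)+α = α+1 by ring, Real.Gamma_add_one hα0.ne']
  rw [sub_add_cancel]
  rw [div_div]

lemma key (α r : ℝ) (hα0 : 0 < α) (hα1 : α < 1) (hr : 0 < r) :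
    α * (r+1)^(α-1) < (r+1)^α - r^α := by
  obtain ⟨c, hc, heq⟩ := exists_hasDerivAt_eq_slope (fun x => x ^ α) (fun x => α * x^(α-1))
    (by linarith : r < r+1)
    (fun x hx => (Real.continuousAt_rpow_const x α
      (Or.inl (ne_of_gt (lt_of_lt_of_le hr hx.1)))).continuousWithinAt)
    (fun x hx => Real.hasDerivAt_rpow_const (Or.inl (ne_of_gt (lt_trans hr hx.1))))
  have h1 : (r+1) - r = 1 := by ring
  rw [h1, div_one] at heq
  have h2 : (r+1)^(α-1) < c^(α-1) :=
    Real.rpow_lt_rpow_of_neg (lt_trans hr hc.1) hc.2 (by linarith)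
  calc α * (r+1)^(α-1) < α * c^(α-1) := by nlinarith
    _ = (r+1)^α - r^α := heq

theorem stmt5 (α : ℝ) (hα0 : 0 < α) (hα1 : α < 1)
    (N : ℕ) (t : ℕ → ℝ) (ht0 : t 0 = 0) (ht : ∀ k, k < N → t k < t (k + 1)) :
    ∀ n, 2 ≤ n → n ≤ N →
      thetaK α t n n = 1 / omegaK (1 + α) (t n - t (n - 1)) ∧
      omegaK α ((t n - t (n - 1)) / (t (n - 1) - t (n - 2)) + 1)
          / (omegaK (1 + α) (t n - t (n - 1)) * omegaK (1 + α) 1)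
        < thetaK α t n n - thetaK α t n (n - 1) := by
  intro n h2 hN
  have hG : 0 < Real.Gamma (1+α) := Real.Gamma_pos_of_pos (by linarith)
  have hGa : 0 < Real.Gamma α := Real.Gamma_pos_of_pos hα0
  have hGeq : Real.Gamma (1+α) = α * Real.Gamma α := by
    rw [show (1:ℝ)+α = α+1 by ring, Real.Gamma_add_one hα0.ne']
  set τ₁ := t n - t (n-1) with hτ₁
  set τ₂ := t (n-1) - t (n-2) with hτ₂
  have hτ₁p : 0 < τ₁ := by
    have := ht (n-1) (by omega)
    rw [show n - 1 + 1 = n by omega] at this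
    simpa [hτ₁] using sub_pos.mpr this
  have hτ₂p : 0 < τ₂ := by
    have := ht (n-2) (by omega)
    rw [show n - 2 + 1 = n - 1 by omega] at this
    simpa [hτ₂] using sub_pos.mpr this
  -- q values
  have hqnn : qK α t n n = τ₁ ^ α / Real.Gamma (1+α) := by
    rw [qK, qval α hα0]
    rw [show t n - t n = 0 by ring, Real.zero_rpow hα0.ne']
    ring_nf
    rw [hτ₁]; ring
  have hq11 : qK α t (n-1) (n-1) = τ₂ ^ α / Real.Gamma (1+α) := by
    rw [qK, qval α hα0]
    rw [show n - 1 - 1 = n - 2 by omega]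
    rw [show t (n-1) - t (n-1) = 0 by ring, Real.zero_rpow hα0.ne']
    ring_nf
    rw [hτ₂]; ring
  have hqn1 : qK α t n (n-1) = ((τ₁+τ₂) ^ α - τ₁ ^ α) / Real.Gamma (1+α) := by
    rw [qK, qval α hα0]
    rw [show n - 1 - 1 = n - 2 by omega]
    rw [show t n - t (n-2) = τ₁ + τ₂ by rw [hτ₁, hτ₂]; ring]
  -- theta values
  have hth0 : thetaK α t n n = Real.Gamma (1+α) / τ₁ ^ α := by
    rw [thetaK, Nat.sub_self]
    show (if (0:ℕ) = 0 then 1 / aK α t n n else 0) = _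
    rw [if_pos rfl, aK, if_pos rfl, hqnn]
    rw [one_div, inv_div]
  have hth1 : thetaK α t n (n-1)
      = -(1 / aK α t (n-1) (n-1)) * (1 / aK α t n n * aK α t n (n-1)) := by
    rw [thetaK, show n - (n-1) = 1 by omega]
    show (if (1:ℕ) ≤ 0 then _ else -(1 / aK α t (n - 1) (n - 1)) *
        ∑ ℓ ∈ Finset.range 1, thetaAux (aK α t) n 0 ℓ * aK α t (n - ℓ) (n - 1)) = _
    rw [if_neg (by omega), Finset.sum_range_one]
    show -(1 / aK α t (n-1) (n-1)) *
        ((if (0:ℕ) = 0 then 1 / aK α t n n else 0) * aK α t (n - 0) (n - 1)) = _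
    rw [if_pos rfl, Nat.sub_zero]
  have ha11 : aK α t (n-1) (n-1) = τ₂ ^ α / Real.Gamma (1+α) := by
    rw [aK, if_pos rfl, hq11]
  have hann : aK α t n n = τ₁ ^ α / Real.Gamma (1+α) := by
    rw [aK, if_pos rfl, hqnn]
  have han1 : aK α t n (n-1) = ((τ₁+τ₂) ^ α - τ₁ ^ α - τ₂ ^ α) / Real.Gamma (1+α) := by
    rw [aK, if_neg (by omega), hqn1, hq11]; ring
  set G := Real.Gamma (1+α)
  set p := τ₁ ^ α with hp
  set q := τ₂ ^ α with hq
  set S := (τ₁+τ₂) ^ α with hS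
  have hpp : 0 < p := Real.rpow_pos_of_pos hτ₁p α
  have hqp : 0 < q := Real.rpow_pos_of_pos hτ₂p α
  have hth1' : thetaK α t n (n-1) = -(G / q) * (G / p * ((S - p - q) / G)) := by
    rw [hth1, ha11, hann, han1, one_div, inv_div, one_div, inv_div]
  -- difference
  have hdiff : thetaK α t n n - thetaK α t n (n-1) = G * (S - p) / (p * q) := by
    rw [hth0, hth1']
    field_simp
    ring
  constructor
  · rw [hth0, omegaK, show (1:ℝ) + α - 1 = α by ring, one_div, inv_div]
  · rw [hdiff]
    set r := τ₁ / τ₂ with hr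
    have hrp : 0 < r := div_pos hτ₁p hτ₂p
    have hSq : S / q = (r+1) ^ α := by
      rw [hS, hq, ← Real.div_rpow (by linarith) hτ₂p.le, hr]
      congr 1
      field_simp
    have hpq : p / q = r ^ α := by
      rw [hp, hq, ← Real.div_rpow hτ₁p.le hτ₂p.le, hr]
    have hkey := key α r hα0 hα1 hrp
    -- LHS value
    have hlhs : omegaK α (r + 1) / (omegaK (1+α) τ₁ * omegaK (1+α) 1)
        = α * (r+1) ^ (α-1) * (G / p) := by
      have e1 : omegaK (1+α) τ₁ = p / G := by
        rw [omegaK, show (1:ℝ)+α-1 = α by ring]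
      have e2 : omegaK (1+α) 1 = 1 / G := by
        rw [omegaK, show (1:ℝ)+α-1 = α by ring, Real.one_rpow]
      have e3 : omegaK α (r+1) = (r+1)^(α-1) / Real.Gamma α := rfl
      rw [e1, e2, e3, hGeq]
      field_simp
    rw [hlhs]
    have h1 : α * (r+1) ^ (α-1) < S/q - p/q := by rw [hSq, hpq]; exact hkey
    have h2 : S/q - p/q = (S - p)/q := by ring
    rw [h2] at h1
    calc α * (r+1) ^ (α-1) * (G / p) < (S - p)/q * (G / p) := by
          apply mul_lt_mul_of_pos_right h1 (div_pos hG hpp)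
      _ = G * (S - p) / (p * q) := by field_simp
end

section
/- For every fixed 1 ≤ n ≤ N, all the DOC kernels are strictly positive: θ_{n−k}^{(n)} > 0 for 1 ≤ k ≤ n. -/
open Finset intervalIntegral Matrix

/-- Explicit formula for `qK`. -/
lemma qK_eq (α : ℝ) (hα0 : 0 < α) (t : ℕ → ℝ) (n k : ℕ) :
    qK α t n k = ((t n - t (k - 1)) ^ α - (t n - t k) ^ α) / (α * Real.Gamma α) := by
  unfold qK omegaK
  rw [intervalIntegral.integral_div, intervalIntegral.integral_comp_sub_left
    (fun x : ℝ => x ^ (α - 1)) (t n),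
    integral_rpow (Or.inl (by linarith : (-1 : ℝ) < α - 1))]
  have : α - 1 + 1 = α := by ring
  rw [this]
  ring

/-- Strict concavity consequence. -/
lemma concave_diff (α : ℝ) (hα0 : 0 < α) (hα1 : α < 1) {a b δ : ℝ}
    (ha : 0 ≤ a) (hb : 0 < b) (hδ : 0 < δ) :
    (a + b + δ) ^ α + a ^ α < (a + δ) ^ α + (a + b) ^ α := by
  have sc := Real.strictConcaveOn_rpow hα0 hα1
  have hT : 0 < b + δ := by linarith
  have hx : a ∈ Set.Ici (0 : ℝ) := ha
  have hy : a + b + δ ∈ Set.Ici (0 : ℝ) := by simp only [Set.mem_Ici]; linarith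
  have hne : a ≠ a + b + δ := by linarith
  have hab1 : b / (b + δ) + δ / (b + δ) = 1 := by
    rw [← add_div]; exact div_self hT.ne'
  have hab2 : δ / (b + δ) + b / (b + δ) = 1 := by
    rw [← add_div, add_comm δ b]; exact div_self hT.ne'
  have h1 := sc.2 hx hy hne (by positivity : (0:ℝ) < b / (b + δ))
    (by positivity : (0:ℝ) < δ / (b + δ)) hab1
  have h2 := sc.2 hx hy hne (by positivity : (0:ℝ) < δ / (b + δ))
    (by positivity : (0:ℝ) < b / (b + δ)) hab2
  simp only [smul_eq_mul] at h1 h2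
  have e1 : b / (b + δ) * a + δ / (b + δ) * (a + b + δ) = a + δ := by
    field_simp; ring
  have e2 : δ / (b + δ) * a + b / (b + δ) * (a + b + δ) = a + b := by
    field_simp; ring
  rw [e1] at h1
  rw [e2] at h2
  have expand : b / (b + δ) * a ^ α + δ / (b + δ) * (a + b + δ) ^ α +
      (δ / (b + δ) * a ^ α + b / (b + δ) * (a + b + δ) ^ α)
      = a ^ α + (a + b + δ) ^ α := by
    field_simp; ring
  linarith [add_lt_add h1 h2, expand]

section main

variable (α : ℝ) (hα0 : 0 < α) (hα1 : α < 1) (N : ℕ) (t : ℕ → ℝ)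
  (ht0 : t 0 = 0) (ht : ∀ k, k < N → t k < t (k + 1))

include hα0 hα1 ht0 ht

lemma t_mono : ∀ {i j : ℕ}, i < j → j ≤ N → t i < t j := by
  intro i j
  induction j with
  | zero => omega
  | succ j ih =>
    intro hij hjN
    rcases Nat.lt_succ_iff_lt_or_eq.mp hij with h | h
    · exact lt_trans (ih h (by omega)) (ht j (by omega))
    · subst h; exact ht i (by omega)

lemma t_nonneg : ∀ {i : ℕ}, i ≤ N → 0 ≤ t i := by
  intro i hi
  rcases Nat.eq_zero_or_pos i with h | h
  · subst h; simp [ht0]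
  · rw [← ht0]; exact (t_mono α hα0 hα1 N t ht0 ht h hi).le

lemma qK_pos : ∀ {n k : ℕ}, 1 ≤ k → k ≤ n → n ≤ N → 0 < qK α t n k := by
  intro n k hk1 hkn hnN
  rw [qK_eq α hα0 t n k]
  have h1 : t (k - 1) < t k := t_mono α hα0 hα1 N t ht0 ht (by omega) (by omega)
  have h2 : t k ≤ t n := by
    rcases eq_or_lt_of_le hkn with h | h
    · rw [h]
    · exact (t_mono α hα0 hα1 N t ht0 ht h hnN).le
  have hlt : (t n - t k) ^ α < (t n - t (k - 1)) ^ α :=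
    Real.rpow_lt_rpow (by linarith) (by linarith) hα0
  have hG : 0 < α * Real.Gamma α := mul_pos hα0 (Real.Gamma_pos_of_pos hα0)
  exact div_pos (by linarith) hG

lemma aK_diag_pos : ∀ {k : ℕ}, 1 ≤ k → k ≤ N → 0 < aK α t k k := by
  intro k hk1 hkN
  rw [aK, if_pos rfl]
  exact qK_pos α hα0 hα1 N t ht0 ht hk1 le_rfl hkN

lemma aK_off_neg : ∀ {n k : ℕ}, 1 ≤ k → k < n → n ≤ N → aK α t n k < 0 := by
  intro n k hk1 hkn hnN
  rw [aK, if_neg (by omega)]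
  rw [qK_eq α hα0 t n k, qK_eq α hα0 t (n - 1) k]
  have hG : 0 < α * Real.Gamma α := mul_pos hα0 (Real.Gamma_pos_of_pos hα0)
  rw [div_sub_div_same, div_neg_iff]
  right
  refine ⟨?_, hG⟩
  · -- set a := t (n-1) - t k, b := t k - t (k-1), δ := t n - t (n-1)
    have h1 : t (k - 1) < t k := t_mono α hα0 hα1 N t ht0 ht (by omega) (by omega)
    have h2 : t k ≤ t (n - 1) := by
      rcases Nat.lt_or_ge k (n - 1) with h | h
      · exact (t_mono α hα0 hα1 N t ht0 ht h (by omega)).le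
      · have : k = n - 1 := by omega
        rw [this]
    have h3 : t (n - 1) < t n := by
      have := t_mono α hα0 hα1 N t ht0 ht (show n - 1 < n by omega) hnN
      exact this
    have key := concave_diff α hα0 hα1 (a := t (n - 1) - t k) (b := t k - t (k - 1))
      (δ := t n - t (n - 1)) (by linarith) (by linarith) (by linarith)
    have e1 : t (n - 1) - t k + (t k - t (k - 1)) + (t n - t (n - 1)) = t n - t (k - 1) := by ring
    have e2 : t (n - 1) - t k + (t n - t (n - 1)) = t n - t k := by ring
    have e3 : t (n - 1) - t k + (t k - t (k - 1)) = t (n - 1) - t (k - 1) := by ring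
    rw [e1, e2, e3] at key
    linarith

end main

lemma thetaAux_stable (A : ℕ → ℕ → ℝ) (n : ℕ) :
    ∀ M m : ℕ, m ≤ M → thetaAux A n M m = thetaAux A n m m := by
  intro M
  induction M with
  | zero =>
    intro m hm
    have : m = 0 := by omega
    subst this
    rfl
  | succ M ih =>
    intro m hm
    rcases Nat.lt_succ_iff_lt_or_eq.mp (Nat.lt_succ_of_le hm) with h | h
    · rw [thetaAux, if_pos (by omega)]
      exact ih m (by omega)
    · subst h; rfl

theorem stmt6 (α : ℝ) (hα0 : 0 < α) (hα1 : α < 1)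
    (N : ℕ) (t : ℕ → ℝ) (ht0 : t 0 = 0) (ht : ∀ k, k < N → t k < t (k + 1)) :
    ∀ n k, 1 ≤ k → k ≤ n → n ≤ N → 0 < thetaK α t n k := by
  intro n k hk1 hkn hnN
  unfold thetaK
  set A := aK α t with hA
  have key : ∀ m : ℕ, m < n → 0 < thetaAux A n m m := by
    intro m
    induction m using Nat.strong_induction_on with
    | _ m ih =>
      intro hmn
      match m with
      | 0 =>
        rw [thetaAux, if_pos rfl]
        have := aK_diag_pos α hα0 hα1 N t ht0 ht (k := n) (by omega) hnN
        rw [← hA] at this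
        positivity
      | M + 1 =>
        rw [thetaAux, if_neg (by omega)]
        have hdiag : 0 < A (n - (M + 1)) (n - (M + 1)) := by
          rw [hA]
          exact aK_diag_pos α hα0 hα1 N t ht0 ht (by omega) (by omega)
        have hsum : ∑ ℓ ∈ Finset.range (M + 1), thetaAux A n M ℓ * A (n - ℓ) (n - (M + 1)) < 0 := by
          apply Finset.sum_neg
          · intro ℓ hℓ
            simp only [Finset.mem_range] at hℓ
            have hθ : 0 < thetaAux A n M ℓ := by
              rw [thetaAux_stable A n M ℓ (by omega)]
              exact ih ℓ (by omega) (by omega)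
            have hAneg : A (n - ℓ) (n - (M + 1)) < 0 := by
              rw [hA]
              exact aK_off_neg α hα0 hα1 N t ht0 ht (by omega) (by omega) (by omega)
            exact mul_neg_of_pos_of_neg hθ hAneg
          · exact ⟨0, Finset.mem_range.mpr (by omega)⟩
        have : 0 < -(∑ ℓ ∈ Finset.range (M + 1), thetaAux A n M ℓ * A (n - ℓ) (n - (M + 1))) := by
          linarith
        calc (0:ℝ) < (1 / A (n - (M + 1)) (n - (M + 1))) *
            -(∑ ℓ ∈ Finset.range (M + 1), thetaAux A n M ℓ * A (n - ℓ) (n - (M + 1))) := by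
              positivity
          _ = -(1 / A (n - (M + 1)) (n - (M + 1))) *
            ∑ ℓ ∈ Finset.range (M + 1), thetaAux A n M ℓ * A (n - ℓ) (n - (M + 1)) := by ring
  exact key (n - k) (by omega)
end

section
/- (Lemma 3.3) For every fixed n with 2 ≤ n ≤ N, the DOC kernels are strictly monotonically decreasing: θ_0^{(n)} > θ_1^{(n)} > ⋯ > θ_{n−1}^{(n)} > 0. -/
open Finset intervalIntegral Matrix

/-! ### Auxiliary lemmas -/

lemma omegaK_pos {α : ℝ} (hα0 : 0 < α) {x : ℝ} (hx : 0 < x) : 0 < omegaK α x :=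
  div_pos (Real.rpow_pos_of_pos hx _) (Real.Gamma_pos_of_pos hα0)

lemma omegaK_anti {α : ℝ} (hα0 : 0 < α) (hα1 : α < 1) {x y : ℝ} (hx : 0 < x) (hxy : x < y) :
    omegaK α y < omegaK α x := by
  unfold omegaK
  exact (div_lt_div_iff_of_pos_right (Real.Gamma_pos_of_pos hα0)).mpr
    (Real.rpow_lt_rpow_of_neg hx hxy (by linarith))

lemma omegaK_cross {α : ℝ} (hα0 : 0 < α) (hα1 : α < 1) {c x0 x : ℝ}
    (hc : 0 < c) (h0 : 0 < x0) (hx : x0 < x) :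
    omegaK α (x0 + c) * omegaK α x < omegaK α x0 * omegaK α (x + c) := by
  have hΓ : 0 < Real.Gamma α := Real.Gamma_pos_of_pos hα0
  unfold omegaK
  rw [div_mul_div_comm, div_mul_div_comm]
  refine (div_lt_div_iff_of_pos_right (by positivity)).mpr ?_
  rw [← Real.mul_rpow (by linarith) (by linarith), ← Real.mul_rpow (by linarith) (by linarith)]
  exact Real.rpow_lt_rpow_of_neg (by nlinarith) (by nlinarith) (by linarith)

lemma omegaK_int {α : ℝ} (hα0 : 0 < α) (c a b : ℝ) :
    IntervalIntegrable (fun s => omegaK α (c - s)) MeasureTheory.volume a b := by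
  have h := ((intervalIntegrable_rpow' (r := α - 1) (by linarith)
      (a := c - a) (b := c - b)).comp_sub_left c).div_const (Real.Gamma α)
  simpa [omegaK, sub_sub_cancel] using h

section
variable {α : ℝ} {N : ℕ} {t : ℕ → ℝ}

lemma qK_pos_s8 (hα0 : 0 < α) (tlt : ∀ i j : ℕ, i < j → j ≤ N → t i < t j)
    {j k : ℕ} (hk : 1 ≤ k) (hkj : k ≤ j) (hjN : j ≤ N) : 0 < qK α t j k := by
  have hab : t (k-1) < t k := tlt _ _ (by omega) (by omega)
  have htkj : t k ≤ t j := by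
    rcases eq_or_lt_of_le hkj with h | h
    · rw [h]
    · exact (tlt k j h hjN).le
  refine intervalIntegral_pos_of_pos_on (omegaK_int hα0 _ _ _) (fun x hx => ?_) hab
  exact omegaK_pos hα0 (by linarith [hx.2])

lemma qK_lt (hα0 : 0 < α) (hα1 : α < 1) (tlt : ∀ i j : ℕ, i < j → j ≤ N → t i < t j)
    {j j' k : ℕ} (hk : 1 ≤ k) (hkj : k ≤ j) (hjj' : j < j') (hj'N : j' ≤ N) :
    qK α t j' k < qK α t j k := by
  have hab : t (k-1) < t k := tlt _ _ (by omega) (by omega)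
  have htkj : t k ≤ t j := by
    rcases eq_or_lt_of_le hkj with h | h
    · rw [h]
    · exact (tlt k j h (by omega)).le
  have htjj : t j < t j' := tlt j j' hjj' hj'N
  have h0 : 0 < ∫ s in (t (k-1))..(t k), (omegaK α (t j - s) - omegaK α (t j' - s)) := by
    refine intervalIntegral_pos_of_pos_on
      ((omegaK_int hα0 _ _ _).sub (omegaK_int hα0 _ _ _)) (fun x hx => ?_) hab
    have h1 : 0 < t j - x := by linarith [hx.2]
    exact sub_pos.mpr (omegaK_anti hα0 hα1 h1 (by linarith))
  rw [intervalIntegral.integral_sub (omegaK_int hα0 _ _ _) (omegaK_int hα0 _ _ _)] at h0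
  unfold qK
  linarith

lemma qK_TP (hα0 : 0 < α) (hα1 : α < 1) (tlt : ∀ i j : ℕ, i < j → j ≤ N → t i < t j)
    {j k n : ℕ} (hk : 1 ≤ k) (hkj : k + 1 ≤ j) (hjn : j < n) (hnN : n ≤ N) :
    qK α t j k * qK α t n (k+1) < qK α t n k * qK α t j (k+1) := by
  have tk1 : t (k-1) < t k := tlt _ _ (by omega) (by omega)
  have tk2 : t k < t (k+1) := tlt _ _ (by omega) (by omega)
  have htkj : t k < t j := tlt _ _ (by omega) (by omega)
  have htjn : t j < t n := tlt _ _ hjn hnN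
  have htk1j : t (k+1) ≤ t j := by
    rcases eq_or_lt_of_le hkj with h | h
    · rw [h]
    · exact (tlt _ _ h (by omega)).le
  have hc : (0:ℝ) < t n - t j := by linarith
  have hw0 : 0 < omegaK α (t j - t k) := omegaK_pos hα0 (by linarith)
  have hwn : 0 < omegaK α (t n - t k) := omegaK_pos hα0 (by linarith)
  have hA : omegaK α (t n - t k) * qK α t j k < omegaK α (t j - t k) * qK α t n k := by
    have h0 : 0 < ∫ s in (t (k-1))..(t k),
        (omegaK α (t j - t k) * omegaK α (t n - s) - omegaK α (t n - t k) * omegaK α (t j - s)) := by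
      refine intervalIntegral_pos_of_pos_on
        (((omegaK_int hα0 (t n) _ _).const_mul _).sub ((omegaK_int hα0 (t j) _ _).const_mul _))
        (fun x hx => ?_) tk1
      have hcross := omegaK_cross hα0 hα1 (c := t n - t j) (x0 := t j - t k) (x := t j - x)
        hc (by linarith) (by linarith [hx.2])
      rw [show t j - t k + (t n - t j) = t n - t k by ring,
          show t j - x + (t n - t j) = t n - x by ring] at hcross
      linarith
    rw [intervalIntegral.integral_sub ((omegaK_int hα0 (t n) _ _).const_mul _)
        ((omegaK_int hα0 (t j) _ _).const_mul _),
        intervalIntegral.integral_const_mul, intervalIntegral.integral_const_mul] at h0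
    unfold qK
    linarith
  have hB : omegaK α (t j - t k) * qK α t n (k+1) ≤ omegaK α (t n - t k) * qK α t j (k+1) := by
    have hBint : (∫ s in (t k)..(t (k+1)), omegaK α (t j - t k) * omegaK α (t n - s))
        ≤ ∫ s in (t k)..(t (k+1)), omegaK α (t n - t k) * omegaK α (t j - s) := by
      refine intervalIntegral.integral_mono_ae_restrict tk2.le
        ((omegaK_int hα0 (t n) _ _).const_mul _) ((omegaK_int hα0 (t j) _ _).const_mul _) ?_
      have hne : ∀ᵐ s : ℝ, s ≠ t (k+1) := by
        rw [MeasureTheory.ae_iff]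
        simpa [not_not, Set.setOf_eq_eq_singleton] using
          MeasureTheory.measure_singleton
            (μ := (MeasureTheory.volume : MeasureTheory.Measure ℝ)) (t (k+1))
      refine (MeasureTheory.ae_restrict_iff' measurableSet_Icc).mpr ?_
      filter_upwards [hne] with s hs hmem
      rcases eq_or_lt_of_le hmem.1 with h | h
      · rw [← h]
        exact le_of_eq (mul_comm _ _)
      · have hs1 : s < t (k+1) := lt_of_le_of_ne hmem.2 hs
        have hx : 0 < t j - s := by linarith
        have hcross := omegaK_cross hα0 hα1 (c := t n - t j) (x0 := t j - s) (x := t j - t k)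
          hc hx (by linarith)
        rw [show t j - s + (t n - t j) = t n - s by ring,
            show t j - t k + (t n - t j) = t n - t k by ring] at hcross
        linarith
    have e1 : qK α t n (k+1) = ∫ s in (t k)..(t (k+1)), omegaK α (t n - s) := by simp [qK]
    have e2 : qK α t j (k+1) = ∫ s in (t k)..(t (k+1)), omegaK α (t j - s) := by simp [qK]
    rw [e1, e2, ← intervalIntegral.integral_const_mul, ← intervalIntegral.integral_const_mul]
    exact hBint
  have hQjk : 0 < qK α t j k := qK_pos_s8 hα0 tlt hk (by omega) (by omega)
  have hQj1 : 0 < qK α t j (k+1) := qK_pos_s8 hα0 tlt (by omega) hkj (by omega)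
  have h1 := mul_le_mul_of_nonneg_left hB hQjk.le
  have h2 := mul_lt_mul_of_pos_right hA hQj1
  have h3 : omegaK α (t j - t k) * (qK α t j k * qK α t n (k+1))
      < omegaK α (t j - t k) * (qK α t n k * qK α t j (k+1)) := by nlinarith [h1, h2]
  exact lt_of_mul_lt_mul_left h3 hw0.le

end

/-! ### The DOC kernels -/

noncomputable def ThN (α : ℝ) (t : ℕ → ℝ) (n m : ℕ) : ℝ := thetaAux (aK α t) n m m

lemma thetaAux_stab (A : ℕ → ℕ → ℝ) (n : ℕ) :
    ∀ M m, m ≤ M → thetaAux A n M m = thetaAux A n m m := by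
  intro M
  induction M with
  | zero => intro m hm; interval_cases m; rfl
  | succ M ih =>
    intro m hm
    rcases eq_or_lt_of_le hm with h | h
    · subst h; rfl
    · have hm' : m ≤ M := by omega
      show thetaAux A n (M+1) m = _
      simp only [thetaAux]
      rw [if_pos hm']
      exact ih m hm'

lemma ThN_succ (α : ℝ) (t : ℕ → ℝ) (n M : ℕ) :
    ThN α t n (M+1) = -(1 / aK α t (n - (M + 1)) (n - (M + 1))) *
      ∑ ℓ ∈ Finset.range (M + 1), ThN α t n ℓ * aK α t (n - ℓ) (n - (M + 1)) := by
  show thetaAux (aK α t) n (M+1) (M+1) = _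
  simp only [thetaAux]
  rw [if_neg (by omega)]
  congr 1
  refine Finset.sum_congr rfl fun ℓ hℓ => ?_
  rw [thetaAux_stab (aK α t) n M ℓ (by have := Finset.mem_range.mp hℓ; omega)]
  rfl

lemma ThN_zero (α : ℝ) (t : ℕ → ℝ) (n : ℕ) : ThN α t n 0 = 1 / qK α t n n := by
  show thetaAux (aK α t) n 0 0 = _
  simp [thetaAux, aK]

section
variable {α : ℝ} {N : ℕ} {t : ℕ → ℝ}

lemma ThN_rec (hα0 : 0 < α) (tlt : ∀ i j : ℕ, i < j → j ≤ N → t i < t j)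
    {n m : ℕ} (hnN : n ≤ N) (hm1 : 1 ≤ m) (hmn : m < n) :
    ThN α t n m * qK α t (n - m) (n - m)
      = ∑ ℓ ∈ Finset.range m, ThN α t n ℓ *
          (qK α t (n - ℓ - 1) (n - m) - qK α t (n - ℓ) (n - m)) := by
  obtain ⟨M, rfl⟩ : ∃ M, m = M + 1 := ⟨m - 1, by omega⟩
  have hQA : qK α t (n - (M+1)) (n - (M+1)) ≠ 0 :=
    (qK_pos_s8 hα0 tlt (by omega) le_rfl (by omega)).ne'
  have h2 : ThN α t n (M+1) = -(1 / qK α t (n - (M+1)) (n - (M+1))) *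
      ∑ ℓ ∈ Finset.range (M+1), ThN α t n ℓ *
        (qK α t (n - ℓ) (n - (M+1)) - qK α t (n - ℓ - 1) (n - (M+1))) := by
    rw [ThN_succ]
    have hdiag : aK α t (n - (M+1)) (n - (M+1)) = qK α t (n - (M+1)) (n - (M+1)) := by
      simp [aK]
    rw [hdiag]
    congr 1
    refine Finset.sum_congr rfl fun ℓ hℓ => ?_
    have hℓM : ℓ < M + 1 := Finset.mem_range.mp hℓ
    have hne : ¬ (n - (M+1) = n - ℓ) := by omega
    rw [aK, if_neg hne]
  rw [h2]
  have hcan : ∀ S : ℝ, (-(1 / qK α t (n - (M+1)) (n - (M+1))) * S) *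
      qK α t (n - (M+1)) (n - (M+1)) = -S := by
    intro S; field_simp
  rw [hcan]
  rw [← Finset.sum_neg_distrib]
  exact Finset.sum_congr rfl fun ℓ _ => by ring

end

theorem stmt8 (α : ℝ) (hα0 : 0 < α) (hα1 : α < 1)
    (N : ℕ) (t : ℕ → ℝ) (ht0 : t 0 = 0) (ht : ∀ k, k < N → t k < t (k + 1)) :
    ∀ n, 2 ≤ n → n ≤ N →
      (∀ k, 2 ≤ k → k ≤ n → thetaK α t n (k - 1) < thetaK α t n k) ∧
      0 < thetaK α t n 1 := by
  intro n hn2 hnN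
  -- strict monotonicity of the mesh
  have tlt0 : ∀ j, j ≤ N → ∀ i, i < j → t i < t j := by
    intro j
    induction j with
    | zero => intro _ i hi; omega
    | succ j ih =>
      intro hj i hi
      rcases Nat.lt_succ_iff_lt_or_eq.mp hi with h | h
      · exact lt_trans (ih (by omega) i h) (ht j (by omega))
      · subst h; exact ht i (by omega)
  have tlt : ∀ i j : ℕ, i < j → j ≤ N → t i < t j := fun i j h1 h2 => tlt0 j h2 i h1
  -- positivity of the DOC kernels
  have hTpos : ∀ m, m < n → 0 < ThN α t n m := by
    intro m
    induction m using Nat.strong_induction_on with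
    | _ m ih =>
      intro hmn
      rcases Nat.eq_zero_or_pos m with rfl | hm1
      · rw [ThN_zero]
        exact one_div_pos.mpr (qK_pos_s8 hα0 tlt (by omega) le_rfl hnN)
      · have hrec := ThN_rec hα0 tlt hnN hm1 hmn
        have hQA : 0 < qK α t (n-m) (n-m) := qK_pos_s8 hα0 tlt (by omega) le_rfl (by omega)
        have hS : 0 < ∑ ℓ ∈ Finset.range m, ThN α t n ℓ *
            (qK α t (n-ℓ-1) (n-m) - qK α t (n-ℓ) (n-m)) := by
          refine Finset.sum_pos (fun ℓ hℓ => ?_) (Finset.nonempty_range_iff.mpr (by omega))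
          have hℓm : ℓ < m := Finset.mem_range.mp hℓ
          refine mul_pos (ih ℓ hℓm (by omega)) (sub_pos.mpr ?_)
          exact qK_lt hα0 hα1 tlt (k := n-m) (j := n-ℓ-1) (j' := n-ℓ)
            (by omega) (by omega) (by omega) (by omega)
        rw [← hrec] at hS
        rcases mul_pos_iff.mp hS with ⟨h, _⟩ | ⟨_, h⟩
        · exact h
        · linarith
  -- the summation-by-parts identity
  have hI : ∀ k, 1 ≤ k → k ≤ n - 1 →
      ∑ ℓ ∈ Finset.range (n-k), (ThN α t n ℓ - ThN α t n (ℓ+1)) * qK α t (n-ℓ-1) k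
        = ThN α t n 0 * qK α t n k := by
    intro k hk1 hk2
    have hnk : n - (n - k) = k := by omega
    have hrec := ThN_rec hα0 tlt hnN (m := n - k) (by omega) (by omega)
    rw [hnk] at hrec
    have e1 : ∑ ℓ ∈ Finset.range (n-k), (ThN α t n ℓ - ThN α t n (ℓ+1)) * qK α t (n-ℓ-1) k
        = (∑ ℓ ∈ Finset.range (n-k), ThN α t n ℓ * qK α t (n-ℓ-1) k)
          - ∑ ℓ ∈ Finset.range (n-k), ThN α t n (ℓ+1) * qK α t (n-(ℓ+1)) k := by
      rw [← Finset.sum_sub_distrib]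
      refine Finset.sum_congr rfl fun ℓ _ => ?_
      rw [Nat.sub_sub]
      ring
    have e2 : ∑ ℓ ∈ Finset.range (n-k+1), ThN α t n ℓ * qK α t (n-ℓ) k
        = (∑ ℓ ∈ Finset.range (n-k), ThN α t n (ℓ+1) * qK α t (n-(ℓ+1)) k)
          + ThN α t n 0 * qK α t n k := Finset.sum_range_succ' _ _
    have e3 : ∑ ℓ ∈ Finset.range (n-k+1), ThN α t n ℓ * qK α t (n-ℓ) k
        = (∑ ℓ ∈ Finset.range (n-k), ThN α t n ℓ * qK α t (n-ℓ) k)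
          + ThN α t n (n-k) * qK α t (n-(n-k)) k := Finset.sum_range_succ _ _
    rw [hnk] at e3
    have e4 : ∑ ℓ ∈ Finset.range (n-k), ThN α t n ℓ *
          (qK α t (n-ℓ-1) k - qK α t (n-ℓ) k)
        = (∑ ℓ ∈ Finset.range (n-k), ThN α t n ℓ * qK α t (n-ℓ-1) k)
          - ∑ ℓ ∈ Finset.range (n-k), ThN α t n ℓ * qK α t (n-ℓ) k := by
      rw [← Finset.sum_sub_distrib]
      exact Finset.sum_congr rfl fun ℓ _ => by ring
    rw [e4] at hrec
    linarith [e1, e2, e3, hrec]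
  -- strict monotonicity of the DOC kernels
  have hE : ∀ ℓ, ℓ ≤ n - 2 → 0 < ThN α t n ℓ - ThN α t n (ℓ+1) := by
    intro ℓ
    induction ℓ using Nat.strong_induction_on with
    | _ ℓ ih =>
      intro hℓ
      have hk1 : 1 ≤ n - 1 - ℓ := by omega
      have hkn : n - 1 - ℓ ≤ n - 1 := by omega
      have hIk := hI (n - 1 - ℓ) hk1 hkn
      have hnk1 : n - (n - 1 - ℓ) = ℓ + 1 := by omega
      rw [hnk1, Finset.sum_range_succ] at hIk
      have hnl1 : n - ℓ - 1 = n - 1 - ℓ := by omega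
      rw [hnl1] at hIk
      have hQkk : 0 < qK α t (n-1-ℓ) (n-1-ℓ) := qK_pos_s8 hα0 tlt (by omega) le_rfl (by omega)
      have hQn1 : 0 < qK α t n (n-1-ℓ+1) := qK_pos_s8 hα0 tlt (by omega) (by omega) (by omega)
      rcases Nat.eq_zero_or_pos ℓ with rfl | hℓ1
      · rw [Finset.sum_range_zero, zero_add] at hIk
        have h1 : 0 < ThN α t n 0 * qK α t n (n-1-0) :=
          mul_pos (hTpos 0 (by omega)) (qK_pos_s8 hα0 tlt (by omega) (by omega) (by omega))
        rw [← hIk] at h1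
        rcases mul_pos_iff.mp h1 with ⟨h, _⟩ | ⟨_, h⟩
        · exact h
        · linarith
      · have hIk1 := hI (n - 1 - ℓ + 1) (by omega) (by omega)
        have hnk2 : n - (n - 1 - ℓ + 1) = ℓ := by omega
        rw [hnk2] at hIk1
        have key : (ThN α t n ℓ - ThN α t n (ℓ+1)) *
              (qK α t (n-1-ℓ) (n-1-ℓ) * qK α t n (n-1-ℓ+1))
            = ∑ i ∈ Finset.range ℓ, (ThN α t n i - ThN α t n (i+1)) *
                (qK α t n (n-1-ℓ) * qK α t (n-i-1) (n-1-ℓ+1)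
                  - qK α t n (n-1-ℓ+1) * qK α t (n-i-1) (n-1-ℓ)) := by
          have h1 : ∑ i ∈ Finset.range ℓ, (ThN α t n i - ThN α t n (i+1)) *
                (qK α t n (n-1-ℓ) * qK α t (n-i-1) (n-1-ℓ+1)
                  - qK α t n (n-1-ℓ+1) * qK α t (n-i-1) (n-1-ℓ))
              = qK α t n (n-1-ℓ) * (∑ i ∈ Finset.range ℓ,
                  (ThN α t n i - ThN α t n (i+1)) * qK α t (n-i-1) (n-1-ℓ+1))
                - qK α t n (n-1-ℓ+1) * (∑ i ∈ Finset.range ℓ,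
                  (ThN α t n i - ThN α t n (i+1)) * qK α t (n-i-1) (n-1-ℓ)) := by
            rw [Finset.mul_sum, Finset.mul_sum, ← Finset.sum_sub_distrib]
            exact Finset.sum_congr rfl fun i _ => by ring
          rw [h1, hIk1]
          linear_combination qK α t n (n-1-ℓ+1) * hIk
        have hpos : 0 < ∑ i ∈ Finset.range ℓ, (ThN α t n i - ThN α t n (i+1)) *
            (qK α t n (n-1-ℓ) * qK α t (n-i-1) (n-1-ℓ+1)
              - qK α t n (n-1-ℓ+1) * qK α t (n-i-1) (n-1-ℓ)) := by
          refine Finset.sum_pos (fun i hi => ?_) (Finset.nonempty_range_iff.mpr (by omega))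
          have hiℓ : i < ℓ := Finset.mem_range.mp hi
          refine mul_pos (ih i hiℓ (by omega)) ?_
          have hTP := qK_TP hα0 hα1 tlt (j := n-i-1) (k := n-1-ℓ) (n := n)
            (by omega) (by omega) (by omega) hnN
          linarith [hTP]
        rw [← key] at hpos
        rcases mul_pos_iff.mp hpos with ⟨h, _⟩ | ⟨_, h⟩
        · exact h
        · nlinarith [hQkk, hQn1]
  constructor
  · intro k hk2 hkn
    have h := hE (n-k) (by omega)
    have d1 : thetaK α t n k = ThN α t n (n-k) := rfl
    have d2 : thetaK α t n (k-1) = ThN α t n (n-(k-1)) := rfl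
    have e : n - (k-1) = (n-k) + 1 := by omega
    rw [d1, d2, e]
    linarith
  · have h := hTpos (n-1) (by omega)
    exact h
end

section
/- Define the auxiliary kernels ζ_0^{(n)} := θ_0^{(n)} and ζ_{n−j}^{(n)} := θ_{n−j}^{(n)} − θ_{n−j−1}^{(n)} for 1 ≤ j ≤ n−1. Then the kernels ζ are orthogonal to the kernels q, that is, ∑_{j=k}^{n} ζ_{n−j}^{(n)} q_{j−k}^{(j)} = δ_{nk} for all 1 ≤ k ≤ n ≤ N, where δ_{nk} is the Kronecker delta. -/
open Finset intervalIntegral Matrix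

/-- Orthogonality of theta kernels against A. -/
lemma theta_orth (A : ℕ → ℕ → ℝ) (n k : ℕ) (hkn : k ≤ n)
    (hAk : A k k ≠ 0) (hAn : A n n ≠ 0) :
    ∑ j ∈ Finset.Icc k n, thetaAux A n (n - j) (n - j) * A j k
      = if n = k then 1 else 0 := by
  have hre : ∑ j ∈ Finset.Icc k n, thetaAux A n (n - j) (n - j) * A j k
      = ∑ i ∈ Finset.range (n - k + 1), thetaAux A n i i * A (n - i) k := by
    rw [← Finset.Ico_add_one_right_eq_Icc, Finset.sum_Ico_eq_sum_range]
    rw [← Finset.sum_range_reflect]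
    refine Finset.sum_congr (by congr 1; omega) ?_
    intro i hi
    simp only [Finset.mem_range] at hi
    have h1 : k + (n + 1 - k - 1 - i) = n - i := by omega
    have h2 : n - (n - i) = i := by omega
    rw [h1, h2]
  rw [hre]
  rcases Nat.eq_or_lt_of_le hkn with h | h
  · subst h
    rw [if_pos rfl]
    have h0 : thetaAux A k 0 0 = 1 / A k k := by simp [thetaAux]
    rw [show k - k + 1 = 1 by omega, Finset.sum_range_one, Nat.sub_zero, h0, one_div,
      inv_mul_cancel₀ hAn]
  · have hd : n - k = (n - k - 1) + 1 := by omega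
    set M := n - k - 1 with hM
    rw [hd, Finset.sum_range_succ]
    have hnk : n - (M + 1) = k := by omega
    have hlast : thetaAux A n (M + 1) (M + 1)
        = -(1 / A k k) * ∑ ℓ ∈ Finset.range (M + 1), thetaAux A n M ℓ * A (n - ℓ) k := by
      rw [show thetaAux A n (M+1) (M+1)
          = if M + 1 ≤ M then thetaAux A n M (M+1)
            else -(1 / A (n - (M + 1)) (n - (M + 1))) *
              ∑ ℓ ∈ Finset.range (M + 1), thetaAux A n M ℓ * A (n - ℓ) (n - (M + 1)) from rfl]
      rw [if_neg (by omega), hnk]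
    have hsum : ∑ ℓ ∈ Finset.range (M + 1), thetaAux A n M ℓ * A (n - ℓ) k
        = ∑ i ∈ Finset.range (M + 1), thetaAux A n i i * A (n - i) k := by
      refine Finset.sum_congr rfl ?_
      intro i hi
      simp only [Finset.mem_range] at hi
      rw [thetaAux_stab A n M i (by omega)]
    rw [hnk, hlast, hsum, if_neg (by omega)]
    field_simp
    ring

/-- Abel-type summation identity. -/
lemma abel_sum (F G : ℕ → ℝ) (k : ℕ) (hk : 1 ≤ k) :
    ∀ n, k ≤ n →
      (∑ j ∈ Finset.Ico k n, (F j - F (j+1)) * G j) + F n * G n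
        = F k * G k + ∑ j ∈ Finset.Icc (k+1) n, F j * (G j - G (j-1)) := by
  intro n hn
  induction n, hn using Nat.le_induction with
  | base => simp
  | succ n hn ih =>
      rw [Finset.sum_Ico_succ_top hn]
      have h2 : ∑ j ∈ Finset.Icc (k+1) (n+1), F j * (G j - G (j-1))
          = (∑ j ∈ Finset.Icc (k+1) n, F j * (G j - G (j-1))) + F (n+1) * (G (n+1) - G n) := by
        rw [← Finset.Ico_add_one_right_eq_Icc, Finset.sum_Ico_succ_top (by omega), Finset.Ico_add_one_right_eq_Icc]
        simp
      rw [h2, ← add_assoc, ← ih]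
      ring

theorem stmt10 (α : ℝ) (hα0 : 0 < α) (hα1 : α < 1)
    (N : ℕ) (t : ℕ → ℝ) (ht0 : t 0 = 0) (ht : ∀ k, k < N → t k < t (k + 1)) :
    ∀ n k, 1 ≤ k → k ≤ n → n ≤ N →
      ∑ j ∈ Finset.Icc k n, zetaK α t n j * qK α t j k = if n = k then 1 else 0 := by
  have hq : ∀ k, 1 ≤ k → k ≤ N → 0 < qK α t k k := by
    intro k hk1 hkN
    have hτ : t (k-1) < t k := by
      have := ht (k-1) (by omega)
      rwa [show k - 1 + 1 = k by omega] at this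
    have hcomp : qK α t k k
        = ∫ s in (t (k-1))..(t k), (fun u => u ^ (α-1) / Real.Gamma α) (t k - s) := rfl
    rw [hcomp, intervalIntegral.integral_comp_sub_left (fun u => u ^ (α-1) / Real.Gamma α) (t k)]
    rw [intervalIntegral.integral_div, integral_rpow (Or.inl (by linarith : (-1:ℝ) < α - 1))]
    rw [sub_self, show α - 1 + 1 = α by ring, Real.zero_rpow (ne_of_gt hα0), sub_zero]
    have hτ' : (0:ℝ) < t k - t (k-1) := by linarith
    positivity
  have hA : ∀ k, 1 ≤ k → k ≤ N → aK α t k k ≠ 0 := by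
    intro k hk1 hkN
    have : aK α t k k = qK α t k k := by simp [aK]
    rw [this]; exact ne_of_gt (hq k hk1 hkN)
  intro n k hk1 hkn hnN
  set F : ℕ → ℝ := fun j => thetaK α t n j with hF
  set G : ℕ → ℝ := fun j => qK α t j k with hG
  -- zeta side
  have hz : ∑ j ∈ Finset.Icc k n, zetaK α t n j * qK α t j k
      = (∑ j ∈ Finset.Ico k n, (F j - F (j+1)) * G j) + F n * G n := by
    rw [← Finset.Ico_insert_right hkn, Finset.sum_insert (by simp)]
    rw [show zetaK α t n n = F n by simp [zetaK, hF]]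
    rw [add_comm]
    congr 1
    refine Finset.sum_congr rfl ?_
    intro j hj
    simp only [Finset.mem_Ico] at hj
    rw [show zetaK α t n j = F j - F (j+1) by simp [zetaK, hj.2.ne, hF]]
  -- theta-a side
  have ha : F k * G k + ∑ j ∈ Finset.Icc (k+1) n, F j * (G j - G (j-1))
      = ∑ j ∈ Finset.Icc k n, F j * aK α t j k := by
    rw [← Finset.Ioc_insert_left hkn, Finset.sum_insert (by simp)]
    rw [show aK α t k k = G k by simp [aK, hG]]
    congr 1
    rw [← Finset.Icc_add_one_left_eq_Ioc]
    refine Finset.sum_congr rfl ?_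
    intro j hj
    simp only [Finset.mem_Icc] at hj
    rw [show aK α t j k = G j - G (j-1) by
      simp only [aK, hG]; rw [if_neg (by omega)]]
  rw [hz, abel_sum F G k hk1 n hkn, ha]
  have := theta_orth (aK α t) n k hkn (hA k hk1 (le_trans hkn hnN)) (hA n (le_trans hk1 hkn) hnN)
  calc ∑ j ∈ Finset.Icc k n, F j * aK α t j k
      = ∑ j ∈ Finset.Icc k n, thetaAux (aK α t) n (n - j) (n - j) * aK α t j k := by
        refine Finset.sum_congr rfl fun j hj => ?_
        rw [hF]; rfl
    _ = if n = k then 1 else 0 := this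
end

section
/- (Theorem 3.1: unique solvability) Let M ∈ ℕ, ε > 0, and let D ∈ ℝ^{M×M} be symmetric and negative semi-definite. Fix 1 ≤ n ≤ N and suppose the maximum step size satisfies τ := max_k τ_k < (2 Γ(1+α))^{1/α}, so that θ_0^{(n)} = Γ(1+α) τ_n^{−α} > 1/2. Then for any given u^0, …, u^{n−1} ∈ ℝ^M there exists a unique u^n ∈ ℝ^M satisfying, componentwise for every index i, ∑_{j=1}^{n} θ_{n−j}^{(n)} ( u_i^j − u_i^{j−1} ) = ε² ( D·(u^n + u^{n−1})/2 )_i − H( u_i^n, u_i^{n−1} ). -/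
open Finset intervalIntegral Matrix
open Filter

lemma theta_nn_eq {α : ℝ} (hα0 : 0 < α) (t : ℕ → ℝ) (n : ℕ) (hlt : t (n - 1) < t n) :
    thetaK α t n n = Real.Gamma (1 + α) * (t n - t (n - 1)) ^ (-α) := by
  have hΓα : 0 < Real.Gamma α := Real.Gamma_pos_of_pos hα0
  have hτ : 0 < t n - t (n - 1) := sub_pos.mpr hlt
  have hq : qK α t n n = (t n - t (n - 1)) ^ α / α / Real.Gamma α := by
    unfold qK omegaK
    rw [intervalIntegral.integral_div]
    congr 1
    have h1 : (∫ s in (t (n - 1))..(t n), (t n - s) ^ (α - 1))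
        = ∫ s in (t n - t n)..(t n - t (n - 1)), s ^ (α - 1) :=
      intervalIntegral.integral_comp_sub_left (fun s => s ^ (α - 1)) (t n)
    rw [h1, sub_self, integral_rpow (Or.inl (by linarith))]
    have h2 : α - 1 + 1 = α := by ring
    rw [h2, Real.zero_rpow hα0.ne']
    ring
  have hθ : thetaK α t n n = 1 / aK α t n n := by
    unfold thetaK
    rw [Nat.sub_self]
    simp [thetaAux]
  have ha : aK α t n n = qK α t n n := by simp [aK]
  rw [hθ, ha, hq]
  have hΓ1 : Real.Gamma (1 + α) = α * Real.Gamma α := by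
    rw [add_comm]; exact Real.Gamma_add_one hα0.ne'
  rw [Real.rpow_neg hτ.le, hΓ1]
  have hpos : (0:ℝ) < (t n - t (n - 1)) ^ α := Real.rpow_pos_of_pos hτ α
  field_simp


lemma key_solve (M : ℕ) (θ ε : ℝ) (hθ : 1 / 2 < θ)
    (D : Matrix (Fin M) (Fin M) ℝ) (hDsym : D.IsSymm)
    (hDneg : ∀ w : Fin M → ℝ, w ⬝ᵥ D.mulVec w ≤ 0) (b c : Fin M → ℝ) :
    ∃! v : Fin M → ℝ, ∀ i,
      θ * v i + v i ^ 3 / 3 + v i * b i ^ 2 / 2 - v i / 2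
        - ε ^ 2 / 2 * D.mulVec v i = c i := by
  -- uniqueness part (shared)
  have huniq : ∀ v w : Fin M → ℝ,
      (∀ i, θ * v i + v i ^ 3 / 3 + v i * b i ^ 2 / 2 - v i / 2
        - ε ^ 2 / 2 * D.mulVec v i = c i) →
      (∀ i, θ * w i + w i ^ 3 / 3 + w i * b i ^ 2 / 2 - w i / 2
        - ε ^ 2 / 2 * D.mulVec w i = c i) → v = w := by
    intro v w hv hw
    have key2 : ∀ i, (θ - 1/2) * (v i - w i) ^ 2
        ≤ (ε ^ 2 / 2 * (D.mulVec v i - D.mulVec w i)) * (v i - w i) := by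
      intro i
      have h3 : θ * (v i - w i) + (v i ^ 3 - w i ^ 3) / 3 + (v i - w i) * b i ^ 2 / 2
          - (v i - w i) / 2 - ε ^ 2 / 2 * (D.mulVec v i - D.mulVec w i) = 0 := by
        have h1 := hv i; have h2 := hw i; linarith
      have h4 : (θ * (v i - w i) + (v i ^ 3 - w i ^ 3) / 3 + (v i - w i) * b i ^ 2 / 2
          - (v i - w i) / 2) * (v i - w i)
          = (ε ^ 2 / 2 * (D.mulVec v i - D.mulVec w i)) * (v i - w i) := by
        linear_combination (v i - w i) * h3
      nlinarith [sq_nonneg ((v i - w i) * (2 * v i + w i)), sq_nonneg ((v i - w i) * w i),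
        sq_nonneg ((v i - w i) * b i)]
    have hDd : ∑ i, (ε ^ 2 / 2 * (D.mulVec v i - D.mulVec w i)) * (v i - w i)
        = ε ^ 2 / 2 * ((v - w) ⬝ᵥ D.mulVec (v - w)) := by
      rw [Matrix.mulVec_sub]
      simp only [dotProduct, Pi.sub_apply, Finset.mul_sum]
      exact Finset.sum_congr rfl fun i _ => by ring
    have hsum : ∑ i, (θ - 1/2) * (v i - w i) ^ 2 ≤ 0 := by
      have h5 : ∑ i, (θ - 1/2) * (v i - w i) ^ 2
          ≤ ε ^ 2 / 2 * ((v - w) ⬝ᵥ D.mulVec (v - w)) := by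
        rw [← hDd]; exact Finset.sum_le_sum fun i _ => key2 i
      have h6 := hDneg (v - w)
      nlinarith [sq_nonneg ε]
    have h0 : ∀ i ∈ Finset.univ, 0 ≤ (θ - 1/2) * (v i - w i) ^ 2 :=
      fun i _ => mul_nonneg (by linarith) (sq_nonneg _)
    have hz : ∑ i, (θ - 1/2) * (v i - w i) ^ 2 = 0 :=
      le_antisymm hsum (Finset.sum_nonneg h0)
    funext i
    have := (Finset.sum_eq_zero_iff_of_nonneg h0).mp hz i (Finset.mem_univ i)
    have hne : θ - 1/2 ≠ 0 := by linarith
    have : (v i - w i) ^ 2 = 0 := by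
      rcases mul_eq_zero.mp this with h | h
      · exact absurd h hne
      · exact h
    have := pow_eq_zero_iff (n := 2) (by norm_num) |>.mp this
    linarith [sub_eq_zero.mp this]
  -- existence
  set φ : Fin M → ℝ → ℝ := fun j s =>
    θ / 2 * s ^ 2 + s ^ 4 / 12 + b j ^ 2 * s ^ 2 / 4 - s ^ 2 / 4 - c j * s with hφdef
  set f : (Fin M → ℝ) → ℝ := fun v =>
    (∑ j, φ j (v j)) - ε ^ 2 / 4 * ∑ j, v j * ∑ k, D j k * v k with hfdef
  have hQ : ∀ v : Fin M → ℝ, (∑ j, v j * ∑ k, D j k * v k) = v ⬝ᵥ D.mulVec v := by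
    intro v; simp [dotProduct, Matrix.mulVec]
  have hfcont : Continuous f := by
    apply Continuous.sub
    · exact continuous_finset_sum _ fun j _ => by
        simp only [hφdef]; fun_prop
    · exact Continuous.mul continuous_const
        (continuous_finset_sum _ fun j _ => (continuous_apply j).mul
          (continuous_finset_sum _ fun k _ => continuous_const.mul (continuous_apply k)))
  set C : ℝ := ∑ j, |c j| with hCdef
  set γ : ℝ := θ / 2 - 1 / 4 with hγdef
  have hγ : 0 < γ := by rw [hγdef]; linarith
  have hlow : ∀ v : Fin M → ℝ, γ * ‖v‖ ^ 2 - C * ‖v‖ ≤ f v := by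
    intro v
    have hA : 0 ≤ -(ε ^ 2 / 4 * (∑ j, v j * ∑ k, D j k * v k)) := by
      rw [hQ v]
      have := hDneg v
      nlinarith [sq_nonneg ε]
    have hB : ∀ j, γ * v j ^ 2 - |c j| * |v j| ≤ φ j (v j) := by
      intro j
      simp only [hφdef, hγdef]
      have h1 : c j * v j ≤ |c j| * |v j| := by
        rw [← abs_mul]; exact le_abs_self _
      nlinarith [sq_nonneg (v j ^ 2), sq_nonneg (b j * v j)]
    have hC2 : ‖v‖ ^ 2 ≤ ∑ j, v j ^ 2 := by
      have h1 : ‖v‖ ≤ Real.sqrt (∑ j, v j ^ 2) := by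
        rw [pi_norm_le_iff_of_nonneg (Real.sqrt_nonneg _)]
        intro j
        rw [Real.norm_eq_abs, ← Real.sqrt_sq_eq_abs]
        exact Real.sqrt_le_sqrt
          (Finset.single_le_sum (f := fun k => v k ^ 2) (fun k _ => sq_nonneg _)
            (Finset.mem_univ j))
      calc ‖v‖ ^ 2 ≤ Real.sqrt (∑ j, v j ^ 2) ^ 2 :=
            pow_le_pow_left₀ (norm_nonneg v) h1 2
        _ = ∑ j, v j ^ 2 := Real.sq_sqrt (Finset.sum_nonneg fun j _ => sq_nonneg _)
    have hD2 : ∑ j, |c j| * |v j| ≤ C * ‖v‖ := by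
      rw [hCdef, Finset.sum_mul]
      refine Finset.sum_le_sum fun j _ => mul_le_mul_of_nonneg_left ?_ (abs_nonneg _)
      simpa [Real.norm_eq_abs] using norm_le_pi_norm v j
    have hS : ∑ j, (γ * v j ^ 2 - |c j| * |v j|) ≤ ∑ j, φ j (v j) :=
      Finset.sum_le_sum fun j _ => hB j
    rw [Finset.sum_sub_distrib, ← Finset.mul_sum] at hS
    have h7 : γ * ‖v‖ ^ 2 ≤ γ * ∑ j, v j ^ 2 := mul_le_mul_of_nonneg_left hC2 hγ.le
    have h8 : γ * ‖v‖ ^ 2 - C * ‖v‖ ≤ ∑ j, φ j (v j) := by linarith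
    have h9 : (∑ j, φ j (v j)) ≤ (∑ j, φ j (v j)) - ε ^ 2 / 4 * ∑ j, v j * ∑ k, D j k * v k := by
      linarith [hA]
    show γ * ‖v‖ ^ 2 - C * ‖v‖ ≤ (∑ j, φ j (v j)) - ε ^ 2 / 4 * ∑ j, v j * ∑ k, D j k * v k
    exact le_trans h8 h9
  have hcoer : Tendsto f (cocompact (Fin M → ℝ)) atTop := by
    have h1 : Tendsto (fun r : ℝ => γ * r ^ 2 - C * r) atTop atTop := by
      have h2 : Tendsto (fun r : ℝ => r * (γ * r + -C)) atTop atTop :=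
        Filter.Tendsto.atTop_mul_atTop₀ tendsto_id
          (Filter.tendsto_atTop_add_const_right atTop (-C)
            (Filter.Tendsto.const_mul_atTop hγ tendsto_id))
      have h3 : (fun r : ℝ => r * (γ * r + -C)) = fun r : ℝ => γ * r ^ 2 - C * r := by
        funext r; ring
      rwa [h3] at h2
    exact tendsto_atTop_mono hlow (h1.comp tendsto_norm_cocompact_atTop)
  obtain ⟨x, hx⟩ := hfcont.exists_forall_le hcoer
  refine ⟨x, ?_, fun y hy => huniq y x hy ?_⟩
  all_goals {
    intro i
    set e : Fin M → ℝ := fun j => if j = i then 1 else 0 with hedef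
    have hu : ∀ j, HasDerivAt (fun s : ℝ => x j + s * e j) (e j) 0 := by
      intro j
      simpa using ((hasDerivAt_id (0:ℝ)).mul_const (e j)).const_add (x j)
    have hφd : ∀ j, HasDerivAt (fun s : ℝ => φ j (x j + s * e j))
        ((θ * x j + x j ^ 3 / 3 + b j ^ 2 * x j / 2 - x j / 2 - c j) * e j) 0 := by
      intro j
      have h := hu j
      have h2 := (((((h.pow 2).const_mul (θ / 2)).add ((h.pow 4).div_const 12)).add
        (((h.pow 2).const_mul (b j ^ 2)).div_const 4)).sub ((h.pow 2).div_const 4)).sub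
        (h.const_mul (c j))
      exact h2.congr_deriv (by simp; ring)
    have hQin : ∀ j, HasDerivAt (fun s : ℝ => ∑ k, D j k * (x k + s * e k))
        (∑ k, D j k * e k) 0 :=
      fun j => HasDerivAt.fun_sum fun k _ => (hu k).const_mul (D j k)
    have hQj : ∀ j, HasDerivAt (fun s : ℝ => (x j + s * e j) * ∑ k, D j k * (x k + s * e k))
        (e j * (∑ k, D j k * x k) + x j * ∑ k, D j k * e k) 0 := by
      intro j
      have h2 := (hu j).mul (hQin j)
      exact h2.congr_deriv (by simp)
    have hfd : HasDerivAt (fun s : ℝ => f (x + s • e))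
        ((∑ j, (θ * x j + x j ^ 3 / 3 + b j ^ 2 * x j / 2 - x j / 2 - c j) * e j)
          - ε ^ 2 / 4 * ∑ j, (e j * (∑ k, D j k * x k) + x j * ∑ k, D j k * e k)) 0 := by
      have hfe : (fun s : ℝ => f (x + s • e)) = fun s : ℝ =>
          (∑ j, φ j (x j + s * e j))
            - ε ^ 2 / 4 * ∑ j, (x j + s * e j) * ∑ k, D j k * (x k + s * e k) := by
        funext s
        simp only [hfdef, Pi.add_apply, Pi.smul_apply, smul_eq_mul]
      rw [hfe]
      exact ((HasDerivAt.fun_sum fun j _ => hφd j).sub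
        ((HasDerivAt.fun_sum fun j _ => hQj j).const_mul (ε ^ 2 / 4)))
    have hmin : IsLocalMin (fun s : ℝ => f (x + s • e)) 0 := by
      apply Filter.Eventually.of_forall
      intro s
      simpa using hx (x + s • e)
    have hder0 := hmin.deriv_eq_zero
    rw [hfd.deriv] at hder0
    have he1 : (∑ j, (θ * x j + x j ^ 3 / 3 + b j ^ 2 * x j / 2 - x j / 2 - c j) * e j)
        = θ * x i + x i ^ 3 / 3 + b i ^ 2 * x i / 2 - x i / 2 - c i := by
      simp [hedef, mul_ite, mul_one, mul_zero, Finset.sum_ite_eq', Finset.mem_univ]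
    have he2 : (∑ j, (e j * (∑ k, D j k * x k) + x j * ∑ k, D j k * e k))
        = (∑ k, D i k * x k) + ∑ j, x j * D j i := by
      have hinner : ∀ j, (∑ k, D j k * e k) = D j i := by
        intro j
        simp [hedef, mul_ite, mul_one, mul_zero, Finset.sum_ite_eq', Finset.mem_univ]
      simp only [hinner]
      rw [Finset.sum_add_distrib]
      congr 1
      simp [hedef, ite_mul, one_mul, zero_mul, Finset.sum_ite_eq', Finset.mem_univ]
    have hsymsum : (∑ j, x j * D j i) = ∑ k, D i k * x k := by
      refine Finset.sum_congr rfl fun j _ => ?_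
      rw [hDsym.apply i j]; ring
    rw [he1, he2, hsymsum] at hder0
    have hmv : D.mulVec x i = ∑ k, D i k * x k := by
      simp [Matrix.mulVec, dotProduct]
    rw [hmv]
    linarith
  }

theorem stmt18 (α : ℝ) (hα0 : 0 < α) (hα1 : α < 1)
    (N : ℕ) (t : ℕ → ℝ) (ht0 : t 0 = 0) (ht : ∀ k, k < N → t k < t (k + 1))
    (M : ℕ) (ε : ℝ) (hε : 0 < ε)
    (D : Matrix (Fin M) (Fin M) ℝ) (hDsym : D.IsSymm)
    (hDneg : ∀ w : Fin M → ℝ, w ⬝ᵥ D.mulVec w ≤ 0)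
    (n : ℕ) (hn1 : 1 ≤ n) (hnN : n ≤ N)
    (hτ : ∀ k, 1 ≤ k → k ≤ N → t k - t (k - 1) < (2 * Real.Gamma (1 + α)) ^ (1 / α))
    (u : ℕ → Fin M → ℝ) :
    thetaK α t n n = Real.Gamma (1 + α) * (t n - t (n - 1)) ^ (-α) ∧
    1 / 2 < thetaK α t n n ∧
    ∃! un : Fin M → ℝ, ∀ i,
      (∑ j ∈ Finset.Icc 1 (n - 1), thetaK α t n j * (u j i - u (j - 1) i))
          + thetaK α t n n * (un i - u (n - 1) i)
        = ε ^ 2 * D.mulVec (fun j => (un j + u (n - 1) j) / 2) i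
          - Hfun (un i) (u (n - 1) i) := by
  have hn1N : n - 1 < N := lt_of_lt_of_le (Nat.sub_lt hn1 one_pos) hnN
  have hlt : t (n - 1) < t n := by
    have h := ht (n - 1) hn1N
    rwa [Nat.sub_add_cancel hn1] at h
  have h1 : thetaK α t n n = Real.Gamma (1 + α) * (t n - t (n - 1)) ^ (-α) :=
    theta_nn_eq hα0 t n hlt
  have hτpos : 0 < t n - t (n - 1) := sub_pos.mpr hlt
  have hΓ : 0 < Real.Gamma (1 + α) := Real.Gamma_pos_of_pos (by linarith)
  have h2 : 1 / 2 < thetaK α t n n := by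
    rw [h1]
    have h2Γ : (0:ℝ) < 2 * Real.Gamma (1 + α) := by linarith
    have hτα : (t n - t (n - 1)) ^ α < 2 * Real.Gamma (1 + α) := by
      calc (t n - t (n - 1)) ^ α
          < ((2 * Real.Gamma (1 + α)) ^ (1 / α)) ^ α :=
            Real.rpow_lt_rpow hτpos.le (hτ n hn1 hnN) hα0
        _ = (2 * Real.Gamma (1 + α)) ^ ((1 / α) * α) :=
            (Real.rpow_mul h2Γ.le _ _).symm
        _ = 2 * Real.Gamma (1 + α) := by
            rw [one_div, inv_mul_cancel₀ hα0.ne', Real.rpow_one]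
    have hp : (0:ℝ) < (t n - t (n - 1)) ^ α := Real.rpow_pos_of_pos hτpos α
    rw [Real.rpow_neg hτpos.le, ← div_eq_mul_inv, lt_div_iff₀ hp]
    linarith
  refine ⟨h1, h2, ?_⟩
  set θn : ℝ := thetaK α t n n with hθn
  set S : Fin M → ℝ := fun i => ∑ j ∈ Finset.Icc 1 (n - 1), thetaK α t n j * (u j i - u (j - 1) i) with hS
  set c : Fin M → ℝ := fun i =>
    θn * u (n - 1) i + ε ^ 2 / 2 * D.mulVec (u (n - 1)) i - (u (n - 1) i) ^ 3 / 6
      + u (n - 1) i / 2 - S i with hc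
  obtain ⟨v, hv, huniq⟩ := key_solve M θn ε h2 D hDsym hDneg (u (n - 1)) c
  have havg : ∀ w : Fin M → ℝ, ∀ i,
      D.mulVec (fun j => (w j + u (n - 1) j) / 2) i
        = (D.mulVec w i + D.mulVec (u (n - 1)) i) / 2 := by
    intro w i
    simp only [Matrix.mulVec, dotProduct]
    rw [← Finset.sum_add_distrib, Finset.sum_div]
    exact Finset.sum_congr rfl fun j _ => by ring
  have hiff : ∀ w : Fin M → ℝ,
      (∀ i, S i + θn * (w i - u (n - 1) i)
          = ε ^ 2 * D.mulVec (fun j => (w j + u (n - 1) j) / 2) i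
            - Hfun (w i) (u (n - 1) i)) ↔
      (∀ i, θn * w i + w i ^ 3 / 3 + w i * (u (n - 1) i) ^ 2 / 2 - w i / 2
          - ε ^ 2 / 2 * D.mulVec w i = c i) := by
    intro w
    constructor <;> intro h i <;> have hh := h i
    · rw [havg w i] at hh
      simp only [Hfun] at hh
      simp only [hc]
      linarith
    · rw [havg w i]
      simp only [Hfun]
      simp only [hc] at hh
      linarith
  exact ⟨v, (hiff v).mpr hv, fun y hy => huniq y ((hiff y).mp hy)⟩
end
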